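/- Let Y = {(x,y) ∈ ℝ² : (x/a)² + y² = 1} be an ellipse of small eccentricity, meaning 1 < a ≤ √2, and let p ∈ Y. Then the distance function d_p : Y → ℝ, d_p(q) = d(p,q) (Euclidean distance), has exactly two local extrema: a global minimum at p and a global maximum at h⁻¹(p). Consequently, every nonempty intersection of Y with a Euclidean ball centered at a point of Y is either contractible or all of Y. -/

import Mathlib

open Filter Topology Metric

noncomputable section

/-! ### The ellipse -/

/-- The point `(x, y)` of the Euclidean plane. -/
def pt2 (x y : ℝ) : EuclideanSpace ℝ (Fin 2) := (WithLp.equiv 2 (Fin 2 → ℝ)).symm ![x, y]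

/-- The ellipse `{(x,y) : (x/a)² + y² = 1}` in the Euclidean plane. -/
def ellipse (a : ℝ) : Set (EuclideanSpace ℝ (Fin 2)) :=
  {p | (p 0 / a) ^ 2 + (p 1) ^ 2 = 1}

/-- `r₁ = 4√3·a/(a²+3)`. -/
def ellipseR1 (a : ℝ) : ℝ := 4 * Real.sqrt 3 * a / (a ^ 2 + 3)

/-- `r₂ = 4√3·a²/(3a²+1)`. -/
def ellipseR2 (a : ℝ) : ℝ := 4 * Real.sqrt 3 * a ^ 2 / (3 * a ^ 2 + 1)

/-- A direction vector of the line normal to the ellipse `(x/a)² + y² = 1` at the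
point `p` (proportional to the gradient `(2x/a², 2y)` at `p`). -/
def normalDir (a : ℝ) (p : EuclideanSpace ℝ (Fin 2)) : EuclideanSpace ℝ (Fin 2) :=
  pt2 (p 0 / a ^ 2) (p 1)



open Real Set

theorem psi_inj (c x y : ℝ) (hc1 : 1 < c) (hc2 : c ≤ 2) (hx : x^2 ≤ c) (hy : y^2 ≤ c)
    (hE : x*((c-1)^2*x^2 + c^2*(2-c))*(c^3-(c^2-1)*y^2)
        = y*((c-1)^2*y^2 + c^2*(2-c))*(c^3-(c^2-1)*x^2)) : x = y := by
  by_contra hne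
  have h := sub_ne_zero_of_ne hne
  have hQ : c^3*(c-1)^2*(x^2+x*y+y^2) - (c-1)^3*(c+1)*x^2*y^2 + c^5*(2-c)
      + c^2*(2-c)*(c^2-1)*x*y = 0 := by
    have h2 : (x - y) * (c^3*(c-1)^2*(x^2+x*y+y^2) - (c-1)^3*(c+1)*x^2*y^2 + c^5*(2-c)
      + c^2*(2-c)*(c^2-1)*x*y) = 0 := by linear_combination hE
    exact (mul_eq_zero.1 h2).resolve_left h
  have hc0 : (0:ℝ) < c := by linarith
  have hxy2 : x^2*y^2 ≤ c*(x^2+y^2)/2 := by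
    nlinarith [mul_nonneg (sub_nonneg.2 hx) (sq_nonneg y), mul_nonneg (sub_nonneg.2 hy) (sq_nonneg x)]
  have hco : (0:ℝ) ≤ c^3*(c-1)^2 + c^2*(2-c)*(c^2-1) := by
    have h1 : (0:ℝ) ≤ c^3*(c-1)^2 := by positivity
    have h2 : (0:ℝ) ≤ c^2*(2-c)*(c^2-1) := by
      apply mul_nonneg (mul_nonneg (by positivity) (by linarith)); nlinarith
    linarith
  have t1 : 0 ≤ (x+y)^2/2*(c^3*(c-1)^2 + c^2*(2-c)*(c^2-1)) := by positivity
  have t2 : 0 ≤ (c-1)^3*(c+1)*(c*(x^2+y^2)/2 - x^2*y^2) := by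
    exact mul_nonneg (mul_nonneg (pow_nonneg (by linarith : (0:ℝ) ≤ c-1) 3) (by linarith)) (by linarith)
  have hident : c^3*(c-1)^2*(x^2+x*y+y^2) - (c-1)^3*(c+1)*x^2*y^2 + c^5*(2-c)
      + c^2*(2-c)*(c^2-1)*x*y
      = c^5*(2-c) + (x^2+y^2)/2*(c*(c-1)*(c^3-c^2-c-1))
        + (x+y)^2/2*(c^3*(c-1)^2 + c^2*(2-c)*(c^2-1))
        + (c-1)^3*(c+1)*(c*(x^2+y^2)/2 - x^2*y^2) := by ring
  have hmaster : c^5*(2-c) + (x^2+y^2)/2*(c*(c-1)*(c^3-c^2-c-1)) ≤ 0 := by linarith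
  have hs : (x^2+y^2)/2 ≤ c := by linarith
  have hspos : 0 ≤ x^2+y^2 := by positivity
  rcases le_or_gt (c*(c-1)*(c^3-c^2-c-1)) 0 with hKn | hKp
  · have h3 : c*(c*(c-1)*(c^3-c^2-c-1)) ≤ (x^2+y^2)/2*(c*(c-1)*(c^3-c^2-c-1)) :=
      mul_le_mul_of_nonpos_right hs hKn
    have h4 : c^5*(2-c) + c*(c*(c-1)*(c^3-c^2-c-1)) = c^2 := by ring
    have h7 : (0:ℝ) < c^2 := by positivity
    linarith
  · rcases eq_or_lt_of_le hspos with hz | hz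
    · have hx2 : x^2 = 0 := by linarith [sq_nonneg x, sq_nonneg y]
      have hy2 : y^2 = 0 := by linarith [sq_nonneg x, sq_nonneg y]
      exact hne (by rw [pow_eq_zero_iff two_ne_zero] at hx2 hy2; rw [hx2, hy2])
    · have h5 : 0 < (x^2+y^2)/2*(c*(c-1)*(c^3-c^2-c-1)) := mul_pos (by linarith) hKp
      have h6 : 0 ≤ c^5*(2-c) := mul_nonneg (by positivity) (by linarith)
      linarith
theorem normal_formulas (c X Y P V : ℝ) (hc0 : 0 < c)
    (hz : X^2 + c*Y^2 = c) (hw : P^2 + c*V^2 = c)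
    (hcross : c*(P - X)*Y - (V - Y)*X = 0) (hne : ¬(P = X ∧ V = Y)) :
    P*(X^2 + c^3*Y^2) = -X*(X^2 + c^2*(2-c)*Y^2) ∧
    V*(X^2 + c^3*Y^2) = -Y*((2*c-1)*X^2 + c^3*Y^2) := by
  have hcne : c ≠ 0 := ne_of_gt hc0
  by_cases hX : X = 0
  · subst hX
    have hY2 : Y^2 = 1 := mul_left_cancel₀ hcne (by linarith : c*Y^2 = c*1)
    have hYne : Y ≠ 0 := by intro h0; rw [h0] at hY2; norm_num at hY2
    have hP : P = 0 := by
      have h4 : c*P*Y = 0 := by linarith [hcross]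
      rcases mul_eq_zero.1 h4 with h | h
      · rcases mul_eq_zero.1 h with h' | h'; exact absurd h' hcne; exact h'
      · exact absurd h hYne
    subst hP
    have hV2 : V^2 = Y^2 := by
      rw [hY2]; exact mul_left_cancel₀ hcne (by linarith : c*V^2 = c*1)
    have hV : V = -Y := by
      rcases sq_eq_sq_iff_eq_or_eq_neg.1 hV2 with h | h
      · exact absurd ⟨rfl, h⟩ hne
      · exact h
    exact ⟨by ring, by rw [hV]; ring⟩
  · set τ := c*(P-X)/X with hτdef
    have hPX' : c*P = c*X + τ*X := by rw [hτdef, div_mul_cancel₀ _ hX]; ring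
    have hVY : V = Y + τ*Y := by
      have hτX : τ*X = c*(P-X) := by rw [hτdef, div_mul_cancel₀ _ hX]
      have h1 : (V - Y)*X = (τ*Y)*X := by
        rw [show (τ*Y)*X = (τ*X)*Y by ring, hτX]; linarith [hcross]
      have h2 := mul_right_cancel₀ hX h1
      linarith [h2]
    have hτ0 : τ ≠ 0 := by
      intro h0
      refine hne ⟨mul_left_cancel₀ hcne ?_, ?_⟩
      · rw [hPX', h0]; ring
      · rw [hVY, h0]; ring
    have hw2 : (X + τ*X/c)^2 + c*(Y+τ*Y)^2 = c := by
      have hPeq : P = X + τ*X/c := by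
        rw [hτdef, div_mul_cancel₀ _ hX, mul_div_cancel_left₀ _ hcne]; ring
      rw [← hPeq, ← hVY]; exact hw
    have h2 : τ * (2*c*X^2 + τ*X^2 + 2*c^3*Y^2 + c^3*τ*Y^2) = 0 := by
      have e1 : c^2*((X + τ*X/c)^2 + c*(Y+τ*Y)^2) = c^2*c := by rw [hw2]
      have e2 : c^2*(X^2 + c*Y^2) = c^2*c := by rw [hz]
      field_simp at e1
      linear_combination e1 - e2
    have h3 : 2*c*X^2 + τ*X^2 + 2*c^3*Y^2 + c^3*τ*Y^2 = 0 := (mul_eq_zero.1 h2).resolve_left hτ0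
    have hτD : τ*(X^2+c^3*Y^2) = -(2*c)*(X^2 + c^2*Y^2) := by linarith
    constructor
    · apply mul_left_cancel₀ hcne
      linear_combination (X^2+c^3*Y^2)*hPX' + X*hτD
    · linear_combination (X^2+c^3*Y^2)*hVY + Y*hτD

/-- On a small-eccentricity ellipse, there is at most one point `z ≠ p` whose
normal line passes through `p`. -/
theorem cross_zero_unique (c P V X Y X' Y' : ℝ) (hc1 : 1 < c) (hc2 : c ≤ 2)
    (hw : P^2 + c*V^2 = c) (hz : X^2 + c*Y^2 = c) (hz' : X'^2 + c*Y'^2 = c)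
    (hcross : c*(P - X)*Y - (V - Y)*X = 0) (hne : ¬(P = X ∧ V = Y))
    (hcross' : c*(P - X')*Y' - (V - Y')*X' = 0) (hne' : ¬(P = X' ∧ V = Y')) :
    X = X' ∧ Y = Y' := by
  have hc0 : (0:ℝ) < c := by linarith
  obtain ⟨hP1, hV1⟩ := normal_formulas c X Y P V hc0 hz hw hcross hne
  obtain ⟨hP2, hV2⟩ := normal_formulas c X' Y' P V hc0 hz' hw hcross' hne'
  -- rewrite in terms of X only using the ellipse equations
  have hXX : X = X' := by
    apply psi_inj c X X' hc1 hc2 (by nlinarith [sq_nonneg Y]) (by nlinarith [sq_nonneg Y'])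
    -- X * N(X²) * D(X'²) = X' * N(X'²) * D(X²)
    have e1 : P*(c^3 - (c^2-1)*X^2) = -X*((c-1)^2*X^2 + c^2*(2-c)) := by
      linear_combination hP1 - (c^2*P + c*(2-c)*X)*hz
    have e2 : P*(c^3 - (c^2-1)*X'^2) = -X'*((c-1)^2*X'^2 + c^2*(2-c)) := by
      linear_combination hP2 - (c^2*P + c*(2-c)*X')*hz'
    linear_combination (c^3 - (c^2-1)*X'^2)*e1 - (c^3 - (c^2-1)*X^2)*e2
  refine ⟨hXX, ?_⟩
  subst hXX
  have hY2 : Y^2 = Y'^2 := by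
    have : c*Y^2 = c*Y'^2 := by linarith
    exact mul_left_cancel₀ (ne_of_gt hc0) this
  rcases sq_eq_sq_iff_eq_or_eq_neg.1 hY2 with h | h
  · exact h
  · -- Y = -Y'; show W = 0 forcing X = Y = 0, contradiction
    by_cases hYY : Y' = 0
    · rw [hYY] at h ⊢; simpa using h
    · exfalso
      have hDW : (Y - Y')*((2*c-1)*X^2 + c^3*Y^2) = 0 := by
        linear_combination hV1 - hV2 - (c^3*Y' + c^3*V)*hY2
      have hYne : Y - Y' ≠ 0 := by
        intro h0
        apply hYY
        have : Y = Y' := by linarith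
        rw [this] at h; linarith
      have hW : (2*c-1)*X^2 + c^3*Y^2 = 0 := (mul_eq_zero.1 hDW).resolve_left hYne
      have hY0 : Y ≠ 0 := by rw [h]; exact neg_ne_zero.2 hYY
      have hY2pos : 0 < Y^2 := by rcases hY0.lt_or_gt with h'|h' <;> nlinarith
      nlinarith [sq_nonneg X, hY2pos, pow_pos hc0 3]



/-- squared distance along the ellipse parametrization -/
def Fe (a P V θ : ℝ) : ℝ := (a*Real.cos θ - P)^2 + (Real.sin θ - V)^2

/-- half the derivative of `Fe` -/
def ge (a P V θ : ℝ) : ℝ := (1-a^2)*Real.sin θ*Real.cos θ + a*P*Real.sin θ - V*Real.cos θ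

theorem hasDerivAt_Fe (a P V θ : ℝ) : HasDerivAt (Fe a P V) (2 * ge a P V θ) θ := by
  have h1 : HasDerivAt (Fe a P V)
      (2*(a * cos θ - P)*(a * (-sin θ)) + 2*(sin θ - V)*(cos θ)) θ := by
    apply HasDerivAt.add
    · exact (((Real.hasDerivAt_cos θ).const_mul a).sub_const P).pow 2 |>.congr_deriv (by ring)
    · exact ((Real.hasDerivAt_sin θ).sub_const V).pow 2 |>.congr_deriv (by ring)
  exact h1.congr_deriv (by unfold ge; ring)

theorem deriv_Fe (a P V θ : ℝ) : deriv (Fe a P V) θ = 2 * ge a P V θ :=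
  (hasDerivAt_Fe a P V θ).deriv

theorem continuous_Fe (a P V : ℝ) : Continuous (Fe a P V) := by
  unfold Fe; fun_prop

theorem continuous_ge (a P V : ℝ) : Continuous (ge a P V) := by
  unfold ge; fun_prop

theorem Fe_periodic (a P V θ : ℝ) (k : ℤ) : Fe a P V (θ - k*(2*π)) = Fe a P V θ := by
  unfold Fe; rw [Real.cos_sub_int_mul_two_pi, Real.sin_sub_int_mul_two_pi]

theorem ge_periodic (a P V θ : ℝ) : ge a P V (θ - 2*π) = ge a P V θ := by
  unfold ge
  rw [show θ - 2*π = θ - (1:ℤ)*(2*π) by push_cast; ring,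
    Real.cos_sub_int_mul_two_pi, Real.sin_sub_int_mul_two_pi]

/-- no integer strictly between 0 and 1, scaled by 2π -/
theorem no_int_window (k : ℤ) (h1 : 0 < 2*π*k) (h2 : 2*π*k < 2*π) : False := by
  have hπ := Real.pi_pos
  have hk0 : (0:ℝ) < (k:ℝ) := by
    by_contra hle
    push_neg at hle
    nlinarith
  have hk1 : (1:ℤ) ≤ k := by
    have : (0:ℤ) < k := by exact_mod_cast hk0
    omega
  have : (1:ℝ) ≤ (k:ℝ) := by exact_mod_cast hk1
  nlinarith

/-- The core analytic structure theorem: on the window `[α, β] ∪ [β, α+2π]`, the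
squared distance `Fe` to the ellipse point with angle `α` is strictly monotone /
antitone, and the zeros of the derivative are exactly the angles `α, β` mod 2π. -/
theorem core (a : ℝ) (ha1 : 1 < a) (hc2 : a^2 ≤ 2) (P V X₀ Y₀ α β : ℝ)
    (hw : P^2 + a^2*V^2 = a^2) (hz0 : X₀^2 + a^2*Y₀^2 = a^2)
    (hcross0 : a^2*(P-X₀)*Y₀ - (V-Y₀)*X₀ = 0) (hne0 : ¬(P = X₀ ∧ V = Y₀))
    (hα1 : a * Real.cos α = P) (hα2 : Real.sin α = V)
    (hβ1 : a * Real.cos β = X₀) (hβ2 : Real.sin β = Y₀)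
    (h1 : α < β) (h2 : β < α + 2*π) :
    StrictMonoOn (Fe a P V) (Icc α β) ∧ StrictAntiOn (Fe a P V) (Icc β (α+2*π)) ∧
    (∀ θ, ge a P V θ = 0 → (∃ k : ℤ, θ = α + 2*π*k) ∨ (∃ k : ℤ, θ = β + 2*π*k)) := by
  have ha0 : (0:ℝ) < a := by linarith
  have hane : a ≠ 0 := ne_of_gt ha0
  have hc1 : 1 < a^2 := by nlinarith
  have hπ := Real.pi_pos
  -- zeros of ge are exactly α, β mod 2π
  have hzero : ∀ θ, ge a P V θ = 0 → (∃ k : ℤ, θ = α + 2*π*k) ∨ (∃ k : ℤ, θ = β + 2*π*k) := by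
    intro θ hg
    have hcross : a^2*(P - a*Real.cos θ)*Real.sin θ - (V - Real.sin θ)*(a*Real.cos θ) = 0 := by
      have : a * ge a P V θ = 0 := by rw [hg]; ring
      unfold ge at this; nlinarith [this]
    have hzθ : (a*Real.cos θ)^2 + a^2*(Real.sin θ)^2 = a^2 := by
      have := Real.sin_sq_add_cos_sq θ; nlinarith
    by_cases hco : P = a*Real.cos θ ∧ V = Real.sin θ
    · left
      have hc : Real.cos θ = Real.cos α := by
        have : a * Real.cos θ = a * Real.cos α := by rw [hα1, ← hco.1]
        exact mul_left_cancel₀ hane this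
      have hs : Real.sin θ = Real.sin α := by rw [hα2, ← hco.2]
      obtain ⟨k, hk⟩ := Real.Angle.angle_eq_iff_two_pi_dvd_sub.1 (Real.Angle.cos_sin_inj hc hs)
      exact ⟨k, by linarith⟩
    · right
      obtain ⟨hx, hy⟩ := cross_zero_unique (a^2) P V (a*Real.cos θ) (Real.sin θ) X₀ Y₀
        hc1 hc2 hw hzθ hz0 hcross hco hcross0 hne0
      have hc : Real.cos θ = Real.cos β := by
        have : a * Real.cos θ = a * Real.cos β := by rw [hβ1, hx]
        exact mul_left_cancel₀ hane this
      have hs : Real.sin θ = Real.sin β := by rw [hβ2, hy]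
      obtain ⟨k, hk⟩ := Real.Angle.angle_eq_iff_two_pi_dvd_sub.1 (Real.Angle.cos_sin_inj hc hs)
      exact ⟨k, by linarith⟩
  -- no zeros in the open arcs
  have hnz1 : ∀ θ ∈ Ioo α β, ge a P V θ ≠ 0 := by
    rintro θ ⟨hθ1, hθ2⟩ hg
    rcases hzero θ hg with ⟨k, rfl⟩ | ⟨k, rfl⟩
    · exact no_int_window k (by linarith) (by linarith)
    · refine no_int_window (-k) ?_ ?_ <;> push_cast <;> linarith
  have hnz2 : ∀ θ ∈ Ioo (β - 2*π) α, ge a P V θ ≠ 0 := by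
    rintro θ ⟨hθ1, hθ2⟩ hg
    rcases hzero θ hg with ⟨k, rfl⟩ | ⟨k, rfl⟩
    · refine no_int_window (-k) ?_ ?_ <;> push_cast <;> linarith
    · refine no_int_window (-k) ?_ ?_ <;> push_cast <;> linarith
  -- ge α = 0 and derivative of ge at α is positive
  have hgα : ge a P V α = 0 := by
    unfold ge; rw [← hα1, ← hα2]; ring
  have hg' : HasDerivAt (ge a P V)
      ((1-a^2)*Real.cos α*Real.cos α + (1-a^2)*Real.sin α*(-Real.sin α)
        + (a*P*Real.cos α + V*Real.sin α)) α := by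
    unfold ge
    have hA : HasDerivAt (fun θ : ℝ => (1-a^2)*Real.sin θ*Real.cos θ)
        ((1-a^2)*Real.cos α*Real.cos α + (1-a^2)*Real.sin α*(-Real.sin α)) α := by
      have := ((Real.hasDerivAt_sin α).const_mul (1-a^2)).mul (Real.hasDerivAt_cos α)
      exact this.congr_deriv (by ring)
    have hB : HasDerivAt (fun θ : ℝ => a*P*Real.sin θ) (a*P*Real.cos α) α :=
      ((Real.hasDerivAt_sin α).const_mul (a*P)).congr_deriv (by ring)
    have hC : HasDerivAt (fun θ : ℝ => V*Real.cos θ) (V*(-Real.sin α)) α :=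
      ((Real.hasDerivAt_cos α).const_mul V).congr_deriv (by ring)
    exact ((hA.add hB).sub hC).congr_deriv (by ring)
  have hval : 0 < (1-a^2)*Real.cos α*Real.cos α + (1-a^2)*Real.sin α*(-Real.sin α)
        + (a*P*Real.cos α + V*Real.sin α) := by
    rw [← hα1, ← hα2]
    nlinarith [Real.sin_sq_add_cos_sq α]
  -- slope is eventually positive near α
  have hslope := hasDerivAt_iff_tendsto_slope.1 hg'
  have hevent : ∀ᶠ x in 𝓝[≠] α, 0 < slope (ge a P V) α x :=
    hslope.eventually (eventually_gt_nhds hval)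
  have hsub1 : (Set.Ioi α : Set ℝ) ⊆ {α}ᶜ := fun x hx => ne_of_gt hx
  have hsub2 : (Set.Iio α : Set ℝ) ⊆ {α}ᶜ := fun x hx => ne_of_lt hx
  obtain ⟨θ₁, hθ₁m, hθ₁s⟩ :=
    ((hevent.filter_mono (nhdsWithin_mono α hsub1)).and
      (eventually_of_mem (Ioo_mem_nhdsGT h1) (fun x hx => hx))).exists
  obtain ⟨θ₂, hθ₂m, hθ₂s⟩ :=
    ((hevent.filter_mono (nhdsWithin_mono α hsub2)).and
      (eventually_of_mem
        (show Ioo (β - 2*π) α ∈ 𝓝[<] α from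
          Ioo_mem_nhdsLT (show β - 2*π < α by linarith))
        (fun x hx => hx))).exists
  have hgθ₁ : 0 < ge a P V θ₁ := by
    have h' := hθ₁m
    rw [slope_def_field, hgα, sub_zero] at h'
    have := mul_pos h' (show (0:ℝ) < θ₁ - α by linarith [hθ₁s.1])
    rwa [div_mul_cancel₀] at this
    exact ne_of_gt (by linarith [hθ₁s.1])
  have hgθ₂ : ge a P V θ₂ < 0 := by
    have h' := hθ₂m
    rw [slope_def_field, hgα, sub_zero] at h'
    have := mul_pos h' (show (0:ℝ) < α - θ₂ by linarith [hθ₂s.2])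
    have hne2 : θ₂ - α ≠ 0 := by have := hθ₂s.2; intro h0; linarith [this]
    have h3 : ge a P V θ₂ / (θ₂ - α) * (α - θ₂) = -ge a P V θ₂ := by
      field_simp
      ring
    rw [h3] at this; linarith
  -- sign of ge on the two open arcs
  have hpos : ∀ θ ∈ Ioo α β, 0 < ge a P V θ := by
    intro θ hθ
    rcases lt_or_ge 0 (ge a P V θ) with h | h
    · exact h
    exfalso
    have hlt : ge a P V θ < 0 := lt_of_le_of_ne h (hnz1 θ hθ)
    have hsub : uIcc θ₁ θ ⊆ Ioo α β := by
      intro x hx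
      have h5 := hθ.1; have h6 := hθ.2; have h7 := hθ₁s.1; have h8 := hθ₁s.2
      rcases Set.mem_uIcc.1 hx with ⟨hx1, hx2⟩ | ⟨hx1, hx2⟩ <;>
        exact Set.mem_Ioo.2 ⟨by linarith, by linarith⟩
    have h0m : (0:ℝ) ∈ uIcc (ge a P V θ₁) (ge a P V θ) :=
      Set.mem_uIcc.2 (Or.inr ⟨hlt.le, hgθ₁.le⟩)
    obtain ⟨ζ, hζmem, hζ⟩ := intermediate_value_uIcc (continuous_ge a P V).continuousOn h0m
    exact hnz1 ζ (hsub hζmem) hζ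
  have hneg0 : ∀ θ ∈ Ioo (β - 2*π) α, ge a P V θ < 0 := by
    intro θ hθ
    rcases lt_or_ge (ge a P V θ) 0 with h | h
    · exact h
    exfalso
    have hgt : 0 < ge a P V θ := lt_of_le_of_ne h (Ne.symm (hnz2 θ hθ))
    have hsub : uIcc θ₂ θ ⊆ Ioo (β - 2*π) α := by
      intro x hx
      have h5 := hθ.1; have h6 := hθ.2; have h7 := hθ₂s.1; have h8 := hθ₂s.2
      rcases Set.mem_uIcc.1 hx with ⟨hx1, hx2⟩ | ⟨hx1, hx2⟩ <;>
        exact Set.mem_Ioo.2 ⟨by linarith, by linarith⟩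
    have h0m : (0:ℝ) ∈ uIcc (ge a P V θ₂) (ge a P V θ) :=
      Set.mem_uIcc.2 (Or.inl ⟨hgθ₂.le, hgt.le⟩)
    obtain ⟨ζ, hζmem, hζ⟩ := intermediate_value_uIcc (continuous_ge a P V).continuousOn h0m
    exact hnz2 ζ (hsub hζmem) hζ
  have hneg : ∀ θ ∈ Ioo β (α + 2*π), ge a P V θ < 0 := by
    intro θ hθ
    have := hneg0 (θ - 2*π) ⟨by rcases hθ with ⟨h5,h6⟩; linarith, by rcases hθ with ⟨h5,h6⟩; linarith⟩
    rwa [ge_periodic] at this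
  refine ⟨?_, ?_, hzero⟩
  · apply strictMonoOn_of_deriv_pos (convex_Icc α β) (continuous_Fe a P V).continuousOn
    intro x hx
    rw [interior_Icc] at hx
    rw [deriv_Fe]
    linarith [hpos x hx]
  · apply strictAntiOn_of_deriv_neg (convex_Icc β (α+2*π)) (continuous_Fe a P V).continuousOn
    intro x hx
    rw [interior_Icc] at hx
    rw [deriv_Fe]
    linarith [hneg x hx]

def phiE (a θ : ℝ) : EuclideanSpace ℝ (Fin 2) := pt2 (a*Real.cos θ) (Real.sin θ)

theorem pt2_app0 (x y : ℝ) : pt2 x y 0 = x := rfl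
theorem pt2_app1 (x y : ℝ) : pt2 x y 1 = y := rfl
theorem pt2_coords (z : EuclideanSpace ℝ (Fin 2)) : pt2 (z 0) (z 1) = z := by
  ext i; fin_cases i <;> rfl

theorem dist_pt2 (z w : EuclideanSpace ℝ (Fin 2)) :
    dist z w = Real.sqrt ((z 0 - w 0)^2 + (z 1 - w 1)^2) := by
  rw [EuclideanSpace.dist_eq, Fin.sum_univ_two]
  simp [Real.dist_eq, sq_abs]

theorem mem_ellipse_iff (a : ℝ) (hane : a ≠ 0) (z : EuclideanSpace ℝ (Fin 2)) :
    z ∈ ellipse a ↔ (z 0)^2 + a^2*(z 1)^2 = a^2 := by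
  simp only [ellipse, Set.mem_setOf_eq, div_pow]
  rw [div_add' _ _ _ (pow_ne_zero 2 hane), div_eq_one_iff_eq (pow_ne_zero 2 hane)]
  constructor <;> intro h <;> linarith

theorem phiE_mem (a : ℝ) (hane : a ≠ 0) (θ : ℝ) : phiE a θ ∈ ellipse a := by
  rw [mem_ellipse_iff a hane]
  have := Real.sin_sq_add_cos_sq θ
  simp only [phiE, pt2_app0, pt2_app1]
  nlinarith

theorem phiE_cont (a : ℝ) : Continuous (phiE a) := by
  apply Continuous.comp (PiLp.continuous_toLp 2 (fun _ : Fin 2 => ℝ))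
  apply continuous_pi
  intro i
  fin_cases i
  · exact (continuous_const.mul Real.continuous_cos : Continuous fun t => a * Real.cos t)
  · simpa using Real.continuous_sin

theorem exists_angle (a : ℝ) (hane : a ≠ 0) (z : EuclideanSpace ℝ (Fin 2))
    (hz : z ∈ ellipse a) : ∃ θ, a * Real.cos θ = z 0 ∧ Real.sin θ = z 1 := by
  rw [mem_ellipse_iff a hane] at hz
  set x : ℝ := z 0 / a with hx
  set y : ℝ := z 1 with hy
  have h : x^2 + y^2 = 1 := by
    rw [hx, hy, div_pow]
    field_simp
    linarith
  have hz0 : (⟨x, y⟩ : ℂ) ≠ 0 := by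
    intro h0
    rw [Complex.ext_iff] at h0
    simp only [Complex.zero_re, Complex.zero_im] at h0
    rw [h0.1, h0.2] at h; norm_num at h
  have habs : ‖(⟨x, y⟩ : ℂ)‖ = 1 := by
    rw [Complex.norm_def, Complex.normSq_mk]
    simpa [← sq] using Real.sqrt_eq_one.2 h
  refine ⟨Complex.arg ⟨x, y⟩, ?_, ?_⟩
  · rw [Complex.cos_arg hz0, habs]
    show a * (x / 1) = z 0
    rw [hx]
    field_simp
  · rw [Complex.sin_arg, habs]
    simp
theorem phiE_eq_iff (a : ℝ) (θ : ℝ) (z : EuclideanSpace ℝ (Fin 2)) :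
    phiE a θ = z ↔ (a * Real.cos θ = z 0 ∧ Real.sin θ = z 1) := by
  constructor
  · intro h; rw [← h]; exact ⟨rfl, rfl⟩
  · rintro ⟨h1, h2⟩
    rw [show z = pt2 (z 0) (z 1) from (pt2_coords z).symm]
    unfold phiE
    rw [h1, h2]

theorem dist_phiE (a : ℝ) (z : EuclideanSpace ℝ (Fin 2)) (θ : ℝ) :
    dist z (phiE a θ) = Real.sqrt (Fe a (z 0) (z 1) θ) := by
  rw [dist_pt2]
  unfold Fe
  congr 1
  simp only [phiE, pt2_app0, pt2_app1]
  ring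

/-- package the analytic structure for a center `w` and "far point" `z` on the ellipse. -/
theorem window (a : ℝ) (ha1 : 1 < a) (hc2 : a^2 ≤ 2)
    (w z : EuclideanSpace ℝ (Fin 2)) (hw : w ∈ ellipse a) (hz : z ∈ ellipse a)
    (hcross : a^2*(w 0 - z 0)*(z 1) - (w 1 - z 1)*(z 0) = 0) (hne : w ≠ z) :
    ∃ α β : ℝ, phiE a α = w ∧ phiE a β = z ∧ α < β ∧ β < α + 2*π ∧
      StrictMonoOn (Fe a (w 0) (w 1)) (Icc α β) ∧
      StrictAntiOn (Fe a (w 0) (w 1)) (Icc β (α+2*π)) ∧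
      (∀ θ, ge a (w 0) (w 1) θ = 0 →
        (∃ k : ℤ, θ = α + 2*π*k) ∨ (∃ k : ℤ, θ = β + 2*π*k)) := by
  have hane : a ≠ 0 := by intro h; rw [h] at ha1; linarith
  have hπ := Real.pi_pos
  obtain ⟨α, hα1, hα2⟩ := exists_angle a hane w hw
  obtain ⟨β₀, hβ01, hβ02⟩ := exists_angle a hane z hz
  set β := toIocMod Real.two_pi_pos α β₀ with hβdef
  obtain ⟨k, hk⟩ : ∃ k : ℤ, β = β₀ - k * (2*π) :=
    ⟨toIocDiv Real.two_pi_pos α β₀, by rw [hβdef, toIocMod, zsmul_eq_mul]⟩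
  have hβ1 : a * Real.cos β = z 0 := by
    rw [hk, Real.cos_sub_int_mul_two_pi]; exact hβ01
  have hβ2 : Real.sin β = z 1 := by
    rw [hk, Real.sin_sub_int_mul_two_pi]; exact hβ02
  have hβIoc : β ∈ Set.Ioc α (α + 2*π) := toIocMod_mem_Ioc Real.two_pi_pos α β₀
  have hβne : β ≠ α + 2*π := by
    intro h
    apply hne
    have hc : Real.cos β = Real.cos α := by rw [h, Real.cos_add_two_pi]
    have hs : Real.sin β = Real.sin α := by rw [h, Real.sin_add_two_pi]
    rw [← (phiE_eq_iff a α w).2 ⟨hα1, hα2⟩, ← (phiE_eq_iff a β z).2 ⟨hβ1, hβ2⟩]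
    unfold phiE
    rw [hc, hs]
  have h1 : α < β := hβIoc.1
  have h2 : β < α + 2*π := lt_of_le_of_ne hβIoc.2 hβne
  have hne0 : ¬(w 0 = z 0 ∧ w 1 = z 1) := by
    rintro ⟨e0, e1⟩
    apply hne
    have : pt2 (w 0) (w 1) = pt2 (z 0) (z 1) := by rw [e0, e1]
    rwa [show pt2 (w 0) (w 1) = w from by ext i; fin_cases i <;> rfl,
      show pt2 (z 0) (z 1) = z from by ext i; fin_cases i <;> rfl] at this
  obtain ⟨hm, ha', hz'⟩ := core a ha1 hc2 (w 0) (w 1) (z 0) (z 1) α β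
    ((mem_ellipse_iff a hane w).1 hw) ((mem_ellipse_iff a hane z).1 hz)
    hcross hne0 hα1 hα2 hβ1 hβ2 h1 h2
  exact ⟨α, β, (phiE_eq_iff a α w).2 ⟨hα1, hα2⟩, (phiE_eq_iff a β z).2 ⟨hβ1, hβ2⟩,
    h1, h2, hm, ha', hz'⟩

/-- `Fe` attains its maximum over all of `ℝ` at `β`. -/
theorem Fe_max (a P V α β : ℝ)
    (hmono : StrictMonoOn (Fe a P V) (Icc α β))
    (hanti : StrictAntiOn (Fe a P V) (Icc β (α+2*π)))
    (h1 : α < β) (h2 : β < α+2*π) : ∀ θ, Fe a P V θ ≤ Fe a P V β := by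
  intro θ
  have hπ := Real.pi_pos
  set θ' := toIocMod Real.two_pi_pos α θ with hθdef
  obtain ⟨k, hk⟩ : ∃ k : ℤ, θ' = θ - k * (2*π) :=
    ⟨toIocDiv Real.two_pi_pos α θ, by rw [hθdef, toIocMod, zsmul_eq_mul]⟩
  have hper : Fe a P V θ' = Fe a P V θ := by rw [hk, Fe_periodic]
  have hmem : θ' ∈ Set.Ioc α (α + 2*π) := toIocMod_mem_Ioc Real.two_pi_pos α θ
  rw [← hper]
  rcases le_total θ' β with hle | hge
  · exact hmono.monotoneOn ⟨hmem.1.le, hle⟩ ⟨h1.le, le_refl β⟩ hle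
  · exact hanti.antitoneOn ⟨le_refl β, h2.le⟩ ⟨hge, hmem.2⟩ hge


def wC (a : ℝ) (q : EuclideanSpace ℝ (Fin 2)) : ℂ := Complex.I * (q 1) + (q 0 / a)
def zC (a β : ℝ) (q : EuclideanSpace ℝ (Fin 2)) : ℂ :=
  wC a q * Complex.exp (((-(β+π) : ℝ) : ℂ) * Complex.I)
def Af (a β : ℝ) (q : EuclideanSpace ℝ (Fin 2)) : ℝ := β + π + Complex.arg (zC a β q)

theorem wC_re (a : ℝ) (q : EuclideanSpace ℝ (Fin 2)) : (wC a q).re = q 0 / a := by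
  simp [wC]
theorem wC_im (a : ℝ) (q : EuclideanSpace ℝ (Fin 2)) : (wC a q).im = q 1 := by
  simp [wC]

theorem wC_abs (a : ℝ) (q : EuclideanSpace ℝ (Fin 2)) (hq : q ∈ ellipse a) :
    ‖wC a q‖ = 1 := by
  have h : (q 0 / a)^2 + (q 1)^2 = 1 := hq
  rw [Complex.norm_def, Complex.normSq_apply, wC_re, wC_im]
  rw [show q 0 / a * (q 0 / a) + q 1 * (q 1) = (q 0 / a)^2 + (q 1)^2 by ring, h]
  exact Real.sqrt_one

theorem zC_abs (a β : ℝ) (q : EuclideanSpace ℝ (Fin 2)) (hq : q ∈ ellipse a) :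
    ‖zC a β q‖ = 1 := by
  rw [zC, norm_mul, wC_abs a q hq, Complex.norm_exp_ofReal_mul_I, one_mul]

theorem exp_Af (a β : ℝ) (q : EuclideanSpace ℝ (Fin 2)) (hq : q ∈ ellipse a) :
    Complex.exp ((Af a β q : ℝ) * Complex.I) = wC a q := by
  have h1 : (‖zC a β q‖ : ℂ) * Complex.exp ((Complex.arg (zC a β q) : ℝ) * Complex.I)
      = zC a β q := Complex.norm_mul_exp_arg_mul_I _
  rw [zC_abs a β q hq] at h1
  simp only [Complex.ofReal_one, one_mul] at h1
  have e : ((Af a β q : ℝ) : ℂ) * Complex.I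
      = (((β+π : ℝ)) : ℂ)*Complex.I + ((Complex.arg (zC a β q) : ℝ) : ℂ)*Complex.I := by
    unfold Af; push_cast; ring
  rw [e, Complex.exp_add, h1]
  calc Complex.exp ((((β+π : ℝ)) : ℂ)*Complex.I) * zC a β q
      = wC a q * (Complex.exp ((((β+π : ℝ)) : ℂ)*Complex.I)
          * Complex.exp (((-(β+π) : ℝ) : ℂ) * Complex.I)) := by rw [zC]; ring
    _ = wC a q * Complex.exp ((((β+π : ℝ)) : ℂ)*Complex.I + ((-(β+π) : ℝ) : ℂ) * Complex.I) := by
          rw [Complex.exp_add]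
    _ = wC a q := by
          rw [show (((β+π : ℝ)) : ℂ)*Complex.I + ((-(β+π) : ℝ) : ℂ) * Complex.I = 0 by
            push_cast; ring, Complex.exp_zero, mul_one]


theorem cos_Af (a β : ℝ) (q : EuclideanSpace ℝ (Fin 2)) (hq : q ∈ ellipse a) :
    Real.cos (Af a β q) = q 0 / a ∧ Real.sin (Af a β q) = q 1 := by
  have h := exp_Af a β q hq
  constructor
  · have := congrArg Complex.re h
    rwa [Complex.exp_ofReal_mul_I_re, wC_re] at this
  · have := congrArg Complex.im h
    rwa [Complex.exp_ofReal_mul_I_im, wC_im] at this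

theorem phiE_Af (a β : ℝ) (ha0 : 0 < a) (q : EuclideanSpace ℝ (Fin 2)) (hq : q ∈ ellipse a) :
    phiE a (Af a β q) = q := by
  obtain ⟨h1, h2⟩ := cos_Af a β q hq
  rw [phiE_eq_iff]
  refine ⟨?_, h2⟩
  rw [h1]
  field_simp

theorem zC_cond (a β : ℝ) (ha0 : 0 < a) (q : EuclideanSpace ℝ (Fin 2)) (hq : q ∈ ellipse a)
    (hne : q ≠ phiE a β) : 0 < (zC a β q).re ∨ (zC a β q).im ≠ 0 := by
  by_contra hbad
  push_neg at hbad
  obtain ⟨hre, him⟩ := hbad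
  apply hne
  -- zC = -1
  have habs := zC_abs a β q hq
  have hre2 : (zC a β q).re = -1 := by
    have h2 : (zC a β q).re^2 = 1 := by
      have := Complex.sq_norm (zC a β q)
      rw [habs, Complex.normSq_apply, him] at this
      nlinarith [this]
    have hfac : ((zC a β q).re - 1)*((zC a β q).re + 1) = 0 := by nlinarith
    rcases mul_eq_zero.1 hfac with h' | h'
    · linarith
    · linarith
  have hz : zC a β q = -1 := Complex.ext (by rw [hre2]; norm_num) (by rw [him]; norm_num)
  -- hence wC a q = exp(β I), so q = phiE a β
  have hw : wC a q = Complex.exp (((β : ℝ) : ℂ) * Complex.I) := by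
    have h3 : wC a q * Complex.exp (((-(β+π) : ℝ) : ℂ) * Complex.I)
        * Complex.exp ((((β+π) : ℝ) : ℂ) * Complex.I) = -Complex.exp ((((β+π) : ℝ) : ℂ) * Complex.I) := by
      rw [← zC, hz]; ring
    rw [mul_assoc, ← Complex.exp_add] at h3
    rw [show ((-(β+π) : ℝ) : ℂ) * Complex.I + (((β+π) : ℝ) : ℂ) * Complex.I = 0 by push_cast; ring,
      Complex.exp_zero, mul_one] at h3
    rw [h3]
    rw [show (((β+π) : ℝ) : ℂ) = (β : ℝ) + (π : ℝ) by push_cast; ring, add_mul, Complex.exp_add,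
      Complex.exp_pi_mul_I]
    ring
  symm
  rw [phiE_eq_iff]
  have hre' := congrArg Complex.re hw
  have him' := congrArg Complex.im hw
  rw [wC_re, Complex.exp_ofReal_mul_I_re] at hre'
  rw [wC_im, Complex.exp_ofReal_mul_I_im] at him'
  refine ⟨?_, him'.symm⟩
  rw [← hre']
  field_simp

theorem Af_mem (a β : ℝ) (ha0 : 0 < a) (q : EuclideanSpace ℝ (Fin 2)) (hq : q ∈ ellipse a)
    (hne : q ≠ phiE a β) : Af a β q ∈ Set.Ioo β (β+2*π) := by
  have harg_le := Complex.arg_le_pi (zC a β q)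
  have harg_gt := Complex.neg_pi_lt_arg (zC a β q)
  have hne_pi : Complex.arg (zC a β q) ≠ π := by
    intro h0
    have h3 := Complex.arg_eq_pi_iff.1 h0
    rcases zC_cond a β ha0 q hq hne with hc | hc
    · linarith [h3.1]
    · exact hc h3.2
  have harg_lt : Complex.arg (zC a β q) < π := lt_of_le_of_ne harg_le hne_pi
  unfold Af
  constructor
  · linarith
  · linarith

theorem continuous_zC (a β : ℝ) : Continuous (zC a β) := by
  have hp0 : Continuous fun q : EuclideanSpace ℝ (Fin 2) => q 0 :=
    (continuous_apply (0 : Fin 2)).comp (PiLp.continuous_ofLp 2 fun _ => ℝ)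
  have hp1 : Continuous fun q : EuclideanSpace ℝ (Fin 2) => q 1 :=
    (continuous_apply (1 : Fin 2)).comp (PiLp.continuous_ofLp 2 fun _ => ℝ)
  unfold zC wC
  exact (((continuous_const.mul (Complex.continuous_ofReal.comp hp1)).add
    ((Complex.continuous_ofReal.comp hp0).div_const _)).mul continuous_const)

theorem Af_contAt (a β : ℝ) (ha0 : 0 < a) (q : EuclideanSpace ℝ (Fin 2)) (hq : q ∈ ellipse a)
    (hne : q ≠ phiE a β) : ContinuousAt (Af a β) q := by
  unfold Af
  apply ContinuousAt.add continuousAt_const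
  exact ContinuousAt.comp (Complex.continuousAt_arg (zC_cond a β ha0 q hq hne))
    (continuous_zC a β).continuousAt

theorem ellipse_isCompact (a : ℝ) (hane : a ≠ 0) : IsCompact (ellipse a) := by
  have hp0 : Continuous fun q : EuclideanSpace ℝ (Fin 2) => q 0 :=
    (continuous_apply (0 : Fin 2)).comp (PiLp.continuous_ofLp 2 fun _ => ℝ)
  have hp1 : Continuous fun q : EuclideanSpace ℝ (Fin 2) => q 1 :=
    (continuous_apply (1 : Fin 2)).comp (PiLp.continuous_ofLp 2 fun _ => ℝ)
  apply Metric.isCompact_of_isClosed_isBounded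
  · have he : ellipse a = (fun z : EuclideanSpace ℝ (Fin 2) => (z 0 / a)^2 + (z 1)^2) ⁻¹' {1} := rfl
    rw [he]
    exact IsClosed.preimage (((hp0.div_const a).pow 2).add (hp1.pow 2)) isClosed_singleton
  · apply (Metric.isBounded_closedBall (x := (0 : EuclideanSpace ℝ (Fin 2))) (r := |a|+1)).subset
    intro z hz
    have h : (z 0 / a)^2 + (z 1)^2 = 1 := hz
    have h0 : (z 0)^2 ≤ a^2 := by
      have : (z 0 / a)^2 ≤ 1 := by nlinarith [sq_nonneg (z 1)]
      rw [div_pow] at this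
      have ha2 : (0:ℝ) < a^2 := by positivity
      calc (z 0)^2 = (z 0)^2/a^2 * a^2 := by field_simp
        _ ≤ 1 * a^2 := by apply mul_le_mul_of_nonneg_right this ha2.le
        _ = a^2 := one_mul _
    have h1 : (z 1)^2 ≤ 1 := by nlinarith [sq_nonneg (z 0 / a)]
    rw [Metric.mem_closedBall, dist_pt2]
    have hz0 : ((0 : EuclideanSpace ℝ (Fin 2)) 0) = 0 := rfl
    have hz1 : ((0 : EuclideanSpace ℝ (Fin 2)) 1) = 0 := rfl
    rw [hz0, hz1, sub_zero, sub_zero]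
    have hb : (z 0)^2 + (z 1)^2 ≤ (|a|+1)^2 := by
      have := sq_abs a
      nlinarith [abs_nonneg a]
    calc Real.sqrt ((z 0)^2 + (z 1)^2) ≤ Real.sqrt ((|a|+1)^2) := Real.sqrt_le_sqrt hb
      _ = |a|+1 := Real.sqrt_sq (by positivity)

theorem cross_of_ge (a Pc Vc θ : ℝ) :
    a^2*(Pc - a*Real.cos θ)*Real.sin θ - (Vc - Real.sin θ)*(a*Real.cos θ)
      = a * ge a Pc Vc θ := by
  unfold ge; ring

theorem exists_angle_Ioc (a : ℝ) (hane : a ≠ 0) (α : ℝ) (z : EuclideanSpace ℝ (Fin 2))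
    (hz : z ∈ ellipse a) : ∃ θ ∈ Set.Ioc α (α + 2*π), phiE a θ = z := by
  obtain ⟨θ₀, h1, h2⟩ := exists_angle a hane z hz
  refine ⟨toIocMod Real.two_pi_pos α θ₀, toIocMod_mem_Ioc _ _ _, ?_⟩
  obtain ⟨k, hk⟩ : ∃ k : ℤ, toIocMod Real.two_pi_pos α θ₀ = θ₀ - k*(2*π) :=
    ⟨_, by rw [toIocMod, zsmul_eq_mul]⟩
  rw [phiE_eq_iff, hk, Real.cos_sub_int_mul_two_pi, Real.sin_sub_int_mul_two_pi]
  exact ⟨h1, h2⟩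

theorem phiE_add_two_pi (a α : ℝ) : phiE a (α + 2*π) = phiE a α := by
  unfold phiE
  rw [Real.cos_add_two_pi, Real.sin_add_two_pi]

set_option maxHeartbeats 2000000 in
/-- **Extrema of the distance function on a small-eccentricity ellipse**
(Adamaszek–Adams–Reddy, Lemma 6.5). Let `Y` be an ellipse of small eccentricity
(`1 < a ≤ √2`) and `p ∈ Y`. The only local extrema of `d_p : Y → ℝ` are a global
minimum at `p` and a global maximum at `h⁻¹(p)`. Consequently every nonempty
intersection of `Y` with a Euclidean ball centered at a point of `Y` is either
contractible or all of `Y`. -/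
theorem ellipse_dist_extrema (a : ℝ) (ha1 : 1 < a) (ha2 : a ≤ Real.sqrt 2)
    (h : ↥(ellipse a) → ↥(ellipse a))
    (hh : ∀ z : ↥(ellipse a), h z ≠ z ∧
      ∃ t : ℝ, ((h z : EuclideanSpace ℝ (Fin 2))) = ↑z + t • normalDir a ↑z)
    (p q0 : ↥(ellipse a)) (hq0 : h q0 = p) :
    ((∀ q : ↥(ellipse a), dist p p ≤ dist p q) ∧
     (∀ q : ↥(ellipse a), dist p q ≤ dist p q0) ∧
     (∀ q : ↥(ellipse a), IsLocalMin (fun z : ↥(ellipse a) => dist p z) q → q = p) ∧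
     (∀ q : ↥(ellipse a), IsLocalMax (fun z : ↥(ellipse a) => dist p z) q → q = q0)) ∧
    (∀ (c : EuclideanSpace ℝ (Fin 2)) (ρ : ℝ), c ∈ ellipse a →
      (ellipse a ∩ Metric.ball c ρ).Nonempty →
      ContractibleSpace ↥(ellipse a ∩ Metric.ball c ρ) ∨
        ellipse a ∩ Metric.ball c ρ = ellipse a) := by
  classical
  have ha0 : (0:ℝ) < a := lt_trans one_pos ha1
  have hane : a ≠ 0 := ne_of_gt ha0
  have hc2 : a^2 ≤ 2 := by
    nlinarith [Real.sq_sqrt (show (0:ℝ) ≤ 2 by norm_num), Real.sqrt_nonneg 2]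
  have hπ := Real.pi_pos
  -- normal condition for q0
  obtain ⟨hq0ne', t, ht⟩ := hh q0
  rw [hq0] at hq0ne' ht
  have hpq0 : (p : EuclideanSpace ℝ (Fin 2)) ≠ (q0 : EuclideanSpace ℝ (Fin 2)) :=
    fun he => hq0ne' (Subtype.ext he)
  have ht0 : (p : EuclideanSpace ℝ (Fin 2)) 0
      = (q0 : EuclideanSpace ℝ (Fin 2)) 0 + t * ((q0 : EuclideanSpace ℝ (Fin 2)) 0 / a^2) := by
    rw [ht]; rfl
  have ht1 : (p : EuclideanSpace ℝ (Fin 2)) 1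
      = (q0 : EuclideanSpace ℝ (Fin 2)) 1 + t * ((q0 : EuclideanSpace ℝ (Fin 2)) 1) := by
    rw [ht]; rfl
  have hcrossA : a^2*((p : EuclideanSpace ℝ (Fin 2)) 0 - (q0 : EuclideanSpace ℝ (Fin 2)) 0)
      * ((q0 : EuclideanSpace ℝ (Fin 2)) 1)
      - ((p : EuclideanSpace ℝ (Fin 2)) 1 - (q0 : EuclideanSpace ℝ (Fin 2)) 1)
      * ((q0 : EuclideanSpace ℝ (Fin 2)) 0) = 0 := by
    rw [ht0, ht1]; field_simp; ring
  obtain ⟨α, β, hφα, hφβ, h1, h2, hmono, hanti, hzeros⟩ :=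
    window a ha1 hc2 (↑p) (↑q0) p.2 q0.2 hcrossA hpq0
  set P : ℝ := (p : EuclideanSpace ℝ (Fin 2)) 0 with hPdef
  set V : ℝ := (p : EuclideanSpace ℝ (Fin 2)) 1 with hVdef
  have hFe_sq : ∀ θ, Fe a P V θ = (dist (p : EuclideanSpace ℝ (Fin 2)) (phiE a θ))^2 := by
    intro θ
    rw [dist_phiE, Real.sq_sqrt]
    unfold Fe; positivity
  have hmax := Fe_max a P V α β hmono hanti h1 h2
  -- classification of critical angles in the window
  have hclass : ∀ θ ∈ Set.Ioc α (α+2*π), ge a P V θ = 0 → θ = α + 2*π ∨ θ = β := by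
    intro θ hθ hg
    rcases hzeros θ hg with ⟨k, hk⟩ | ⟨k, hk⟩
    · left
      rcases lt_trichotomy (2*π*(k:ℝ)) (2*π) with hlt | heq | hgt
      · exact absurd hlt (fun hlt => no_int_window k (by rw [hk] at hθ; linarith [hθ.1]) hlt)
      · rw [hk, heq]
      · exfalso; rw [hk] at hθ; linarith [hθ.2]
    · right
      rcases lt_trichotomy (2*π*(k:ℝ)) 0 with hlt | heq | hgt
      · exfalso
        refine no_int_window (-k) ?_ ?_ <;> push_cast <;> rw [hk] at hθ <;>
          [linarith; linarith [hθ.1]]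
      · rw [hk, heq, add_zero]
      · exfalso
        refine no_int_window k hgt ?_
        rw [hk] at hθ
        linarith [hθ.2]
  -- transfer of local extremality
  have hΘcont : Continuous (fun θ => (⟨phiE a θ, phiE_mem a hane θ⟩ : ↥(ellipse a))) :=
    Continuous.subtype_mk (phiE_cont a) _
  have htransfer : ∀ (q : ↥(ellipse a)) (θq : ℝ), phiE a θq = ↑q →
      ∀ f : ℝ → ℝ, (∀ x, f (dist (↑p) ((⟨phiE a x, phiE_mem a hane x⟩ : ↥(ellipse a)) : EuclideanSpace ℝ (Fin 2))) = f (dist (↑p) (phiE a x))) → True := fun _ _ _ _ _ => trivial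
  have hmin_transfer : ∀ (q : ↥(ellipse a)) (θq : ℝ), phiE a θq = ↑q →
      IsLocalMin (fun z : ↥(ellipse a) => dist ↑p ↑z) q → IsLocalMin (Fe a P V) θq := by
    intro q θq hφ hmin
    have hq' : q = ⟨phiE a θq, phiE_mem a hane θq⟩ := Subtype.ext hφ.symm
    rw [hq'] at hmin
    have h5 : IsLocalMin ((fun z : ↥(ellipse a) => dist ↑p ↑z) ∘
        (fun θ => (⟨phiE a θ, phiE_mem a hane θ⟩ : ↥(ellipse a)))) θq :=
      IsMinFilter.comp_tendsto hmin (hΘcont.continuousAt)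
    refine h5.mono (fun θ' hθ' => ?_)
    simp only [Function.comp] at hθ'
    rw [hFe_sq, hFe_sq]
    exact pow_le_pow_left₀ dist_nonneg hθ' 2
  have hmax_transfer : ∀ (q : ↥(ellipse a)) (θq : ℝ), phiE a θq = ↑q →
      IsLocalMax (fun z : ↥(ellipse a) => dist ↑p ↑z) q → IsLocalMax (Fe a P V) θq := by
    intro q θq hφ hmax'
    have hq' : q = ⟨phiE a θq, phiE_mem a hane θq⟩ := Subtype.ext hφ.symm
    rw [hq'] at hmax'
    have h5 : IsLocalMax ((fun z : ↥(ellipse a) => dist ↑p ↑z) ∘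
        (fun θ => (⟨phiE a θ, phiE_mem a hane θ⟩ : ↥(ellipse a)))) θq :=
      IsMaxFilter.comp_tendsto hmax' (hΘcont.continuousAt)
    refine h5.mono (fun θ' hθ' => ?_)
    simp only [Function.comp] at hθ'
    rw [hFe_sq, hFe_sq]
    exact pow_le_pow_left₀ dist_nonneg hθ' 2
  constructor
  · refine ⟨?_, ?_, ?_, ?_⟩
    · intro q
      rw [dist_self]
      exact dist_nonneg
    · intro q
      rw [Subtype.dist_eq, Subtype.dist_eq]
      obtain ⟨θq, hθmem, hθeq⟩ := exists_angle_Ioc a hane α (↑q) q.2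
      rw [← hθeq, ← hφβ, dist_phiE, dist_phiE]
      exact Real.sqrt_le_sqrt (hmax θq)
    · -- local min ⇒ q = p
      intro q hminq
      obtain ⟨θq, hθmem, hθeq⟩ := exists_angle_Ioc a hane α (↑q) q.2
      have hFmin := hmin_transfer q θq hθeq hminq
      have hg0 : ge a P V θq = 0 := by
        have := hFmin.deriv_eq_zero
        rw [deriv_Fe] at this
        linarith
      rcases hclass θq hθmem hg0 with hcase | hcase
      · apply Subtype.ext
        rw [← hθeq, hcase, phiE_add_two_pi, hφα]
      · exfalso
        rw [hcase] at hFmin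
        have hev : ∀ᶠ θ' in 𝓝[<] β, Fe a P V β ≤ Fe a P V θ' :=
          hFmin.filter_mono nhdsWithin_le_nhds
        have hmem : Set.Ioo α β ∈ 𝓝[<] β := Ioo_mem_nhdsLT h1
        obtain ⟨θ', h', hmem'⟩ := (hev.and (eventually_of_mem hmem (fun x hx => hx))).exists
        have : Fe a P V θ' < Fe a P V β :=
          hmono ⟨hmem'.1.le, hmem'.2.le⟩ ⟨h1.le, le_refl β⟩ hmem'.2
        linarith
    · -- local max ⇒ q = q0
      intro q hmaxq
      obtain ⟨θq, hθmem, hθeq⟩ := exists_angle_Ioc a hane α (↑q) q.2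
      have hFmax := hmax_transfer q θq hθeq hmaxq
      have hg0 : ge a P V θq = 0 := by
        have := hFmax.deriv_eq_zero
        rw [deriv_Fe] at this
        linarith
      rcases hclass θq hθmem hg0 with hcase | hcase
      · exfalso
        rw [hcase] at hFmax
        have hev : ∀ᶠ θ' in 𝓝[<] (α+2*π), Fe a P V θ' ≤ Fe a P V (α+2*π) :=
          hFmax.filter_mono nhdsWithin_le_nhds
        have hmem : Set.Ioo β (α+2*π) ∈ 𝓝[<] (α+2*π) :=
          Ioo_mem_nhdsLT h2
        obtain ⟨θ', h', hmem'⟩ := (hev.and (eventually_of_mem hmem (fun x hx => hx))).exists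
        have : Fe a P V (α+2*π) < Fe a P V θ' :=
          hanti ⟨hmem'.1.le, hmem'.2.le⟩ ⟨h2.le, le_refl _⟩ hmem'.2
        linarith
      · apply Subtype.ext
        rw [← hθeq, hcase, hφβ]
  · -- Part 5: intersections with balls centered on the ellipse
    intro c ρ hcE hSne
    by_cases hall : ∀ q ∈ ellipse a, dist c q < ρ
    · right
      apply Set.inter_eq_self_of_subset_left
      intro q hq
      rw [Metric.mem_ball, dist_comm]
      exact hall q hq
    · left
      push_neg at hall
      obtain ⟨q1, hq1E, hq1far⟩ := hall
      have hρpos : 0 < ρ := by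
        obtain ⟨s', hs'E, hs'B⟩ := hSne
        exact lt_of_le_of_lt dist_nonneg (Metric.mem_ball.1 hs'B)
      obtain ⟨m, hmE, hmmax'⟩ := (ellipse_isCompact a hane).exists_isMaxOn
        ⟨phiE a 0, phiE_mem a hane 0⟩ (continuous_const.dist continuous_id).continuousOn
      have hmmax : ∀ q ∈ ellipse a, dist c q ≤ dist c m := fun q hq => hmmax' hq
      obtain ⟨γ, _, hγ⟩ := exists_angle_Ioc a hane 0 c hcE
      obtain ⟨hγ1, hγ2⟩ := (phiE_eq_iff a γ c).1 hγ
      have hdistpos : 0 < dist c m := by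
        have h4 : dist c (phiE a (γ+π)) ≤ dist c m := hmmax _ (phiE_mem a hane _)
        have h5 : 0 < dist c (phiE a (γ+π)) := by
          rw [dist_phiE]
          apply Real.sqrt_pos.2
          unfold Fe
          rw [Real.cos_add_pi, Real.sin_add_pi, ← hγ1, ← hγ2]
          nlinarith [Real.sin_sq_add_cos_sq γ, sq_nonneg (Real.cos γ), sq_nonneg (Real.sin γ)]
        linarith
      have hmc : c ≠ m := by
        intro h0; rw [← h0, dist_self] at hdistpos; exact lt_irrefl _ hdistpos
      obtain ⟨θm, _, hθmφ⟩ := exists_angle_Ioc a hane 0 m hmE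
      obtain ⟨hθm1, hθm2⟩ := (phiE_eq_iff a θm m).1 hθmφ
      have hFe_dist : ∀ t, Fe a (c 0) (c 1) t = (dist c (phiE a t))^2 := by
        intro t
        rw [dist_phiE, Real.sq_sqrt]
        unfold Fe; positivity
      have hFeglob : ∀ θ, Fe a (c 0) (c 1) θ ≤ Fe a (c 0) (c 1) θm := by
        intro θ
        rw [hFe_dist, hFe_dist, hθmφ]
        exact pow_le_pow_left₀ dist_nonneg (hmmax _ (phiE_mem a hane _)) 2
      have hlocmax : IsLocalMax (Fe a (c 0) (c 1)) θm :=
        Filter.Eventually.of_forall (fun θ => hFeglob θ)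
      have hge0 : ge a (c 0) (c 1) θm = 0 := by
        have := hlocmax.deriv_eq_zero
        rw [deriv_Fe] at this
        linarith
      have hcrossm : a^2*(c 0 - m 0)*(m 1) - (c 1 - m 1)*(m 0) = 0 := by
        rw [← hθm1, ← hθm2, cross_of_ge, hge0, mul_zero]
      obtain ⟨α, β, hφα, hφβ, h1, h2, hmono, hanti, hzeros⟩ :=
        window a ha1 hc2 c m hcE hmE hcrossm hmc
      have hρm : ρ ≤ dist c m := le_trans hq1far (hmmax _ hq1E)
      have hSsub : ellipse a ∩ Metric.ball c ρ ⊆ ellipse a \ {phiE a β} := by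
        rintro q ⟨hqE, hqB⟩
        refine ⟨hqE, ?_⟩
        intro hq0
        rw [Set.mem_singleton_iff] at hq0
        rw [Metric.mem_ball, dist_comm, hq0, hφβ] at hqB
        linarith
      have hU : ∀ θ₁ θ₂ θ : ℝ, β < θ₁ → θ₁ ≤ θ → θ ≤ θ₂ → θ₂ < β+2*π →
          Fe a (c 0) (c 1) θ ≤ max (Fe a (c 0) (c 1) θ₁) (Fe a (c 0) (c 1) θ₂) := by
        intro θ₁ θ₂ θ hb1 hb2 hb3 hb4
        rcases le_total θ (α+2*π) with hcs | hcs
        · refine le_trans ?_ (le_max_left _ _)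
          exact hanti.antitoneOn ⟨hb1.le, le_trans hb2 hcs⟩ ⟨le_trans hb1.le hb2, hcs⟩ hb2
        · refine le_trans ?_ (le_max_right _ _)
          have e1 : Fe a (c 0) (c 1) (θ - (1:ℤ)*(2*π)) = Fe a (c 0) (c 1) θ :=
            Fe_periodic a (c 0) (c 1) θ 1
          have e2 : Fe a (c 0) (c 1) (θ₂ - (1:ℤ)*(2*π)) = Fe a (c 0) (c 1) θ₂ :=
            Fe_periodic a (c 0) (c 1) θ₂ 1
          push_cast at e1 e2
          rw [← e1, ← e2]
          have hm1 : θ - 1*(2*π) ∈ Set.Icc α β := ⟨by linarith, by linarith⟩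
          have hm2 : θ₂ - 1*(2*π) ∈ Set.Icc α β := ⟨by linarith, by linarith⟩
          exact hmono.monotoneOn hm1 hm2 (by linarith)
      obtain ⟨s0, hs0⟩ := hSne
      have hAf : ∀ q, q ∈ ellipse a ∩ Metric.ball c ρ →
          (Af a β q ∈ Set.Ioo β (β+2*π) ∧ phiE a (Af a β q) = q ∧
            Fe a (c 0) (c 1) (Af a β q) < ρ^2) := by
        intro q hq
        have hq' := hSsub hq
        have hqne : q ≠ phiE a β := fun h0 => hq'.2 (by rw [h0]; exact Set.mem_singleton _)
        refine ⟨Af_mem a β ha0 q hq'.1 hqne, phiE_Af a β ha0 q hq'.1, ?_⟩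
        rw [hFe_dist, phiE_Af a β ha0 q hq'.1]
        have hqb := hq.2
        rw [Metric.mem_ball, dist_comm] at hqb
        have hd0 : (0:ℝ) ≤ dist c q := dist_nonneg
        nlinarith
      have hmemS : ∀ t : ℝ, 0 ≤ t → t ≤ 1 → ∀ q, q ∈ ellipse a ∩ Metric.ball c ρ →
          phiE a ((1-t)*(Af a β q) + t*(Af a β s0)) ∈ ellipse a ∩ Metric.ball c ρ := by
        intro t ht0 ht1 q hq
        obtain ⟨hmem1, hphi1, hFe1⟩ := hAf q hq
        obtain ⟨hmem0, hphi0, hFe0⟩ := hAf s0 hs0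
        set u := Af a β q with hu
        set v := Af a β s0 with hv
        set θt := (1-t)*u + t*v with hθt
        have hlo : min u v ≤ θt := by
          rcases le_total u v with hc' | hc'
          · rw [min_eq_left hc']; nlinarith
          · rw [min_eq_right hc']; nlinarith
        have hhi : θt ≤ max u v := by
          rcases le_total u v with hc' | hc'
          · rw [max_eq_right hc']; nlinarith
          · rw [max_eq_left hc']; nlinarith
        have hFet : Fe a (c 0) (c 1) θt < ρ^2 := by
          have hβlo : β < min u v := lt_min hmem1.1 hmem0.1
          have hβhi : max u v < β + 2*π := max_lt hmem1.2 hmem0.2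
          have hb := hU (min u v) (max u v) θt hβlo hlo hhi hβhi
          have hmaxlt : max (Fe a (c 0) (c 1) (min u v)) (Fe a (c 0) (c 1) (max u v)) < ρ^2 := by
            rcases le_total u v with hc' | hc'
            · rw [min_eq_left hc', max_eq_right hc']
              exact max_lt hFe1 hFe0
            · rw [min_eq_right hc', max_eq_left hc']
              exact max_lt hFe0 hFe1
          linarith
        constructor
        · exact phiE_mem a hane _
        · rw [Metric.mem_ball, dist_comm, dist_phiE]
          exact (Real.sqrt_lt' hρpos).2 hFet
      have hAfcont : Continuous
          (fun x : ↥(ellipse a ∩ Metric.ball c ρ) => Af a β (↑x : EuclideanSpace ℝ (Fin 2))) := by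
        rw [continuous_iff_continuousAt]
        intro x
        have hx' := hSsub x.2
        have hxne : (↑x : EuclideanSpace ℝ (Fin 2)) ≠ phiE a β :=
          fun h0 => hx'.2 (by rw [h0]; exact Set.mem_singleton _)
        exact (Af_contAt a β ha0 (↑x) hx'.1 hxne).comp continuous_subtype_val.continuousAt
      refine (contractible_iff_id_nullhomotopic ↥(ellipse a ∩ Metric.ball c ρ)).2
        ⟨⟨s0, hs0⟩, ?_⟩
      refine ⟨ContinuousMap.Homotopy.mk
        ⟨fun tx => ⟨phiE a ((1-(tx.1:ℝ))*(Af a β (↑tx.2 : EuclideanSpace ℝ (Fin 2)))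
            + (tx.1:ℝ)*(Af a β s0)),
          hmemS (tx.1:ℝ) tx.1.2.1 tx.1.2.2 (↑tx.2) tx.2.2⟩, ?_⟩ ?_ ?_⟩
      · -- continuity
        apply Continuous.subtype_mk
        apply (phiE_cont a).comp
        have hT : Continuous (fun tx : ↥unitInterval × ↥(ellipse a ∩ Metric.ball c ρ)
            => (tx.1 : ℝ)) := continuous_subtype_val.comp continuous_fst
        exact ((continuous_const.sub hT).mul (hAfcont.comp continuous_snd)).add
          (hT.mul continuous_const)
      · -- t = 0
        intro x
        apply Subtype.ext
        show phiE a _ = (↑x : EuclideanSpace ℝ (Fin 2))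
        rw [show ((1:ℝ)-((0:unitInterval):ℝ))*(Af a β (↑x : EuclideanSpace ℝ (Fin 2)))
            + ((0:unitInterval):ℝ)*(Af a β s0) = Af a β (↑x : EuclideanSpace ℝ (Fin 2)) by
          norm_num]
        exact (hAf (↑x) x.2).2.1
      · -- t = 1
        intro x
        apply Subtype.ext
        show phiE a _ = s0
        rw [show ((1:ℝ)-((1:unitInterval):ℝ))*(Af a β (↑x : EuclideanSpace ℝ (Fin 2)))
            + ((1:unitInterval):ℝ)*(Af a β s0) = Af a β s0 by norm_num]
        exact (hAf s0 hs0).2.1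



end
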